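/- Time reversal identity for a symmetric Markov chain: let p(t,x,y) be a symmetric transition kernel (p(t,x,y) = p(t,y,x)) on a countable state space satisfying the Chapman–Kolmogorov equations, and fix t > 0 and a set C. Then for the associated Markov process Y, P^x(Y_t = y, S_C ∈ [t/2, t]) = P^y(Y_t = x, T_C ≤ t/2), where T_C = inf{s ≥ 0 : Y_s ∈ C} and S_C = sup{s ≤ t : Y_s ∈ C}. -/

import Mathlib

open MeasureTheory

namespace TRI

variable {E : Type*} [Countable E] [MeasurableSpace E]
  (P : E → Measure (ℝ → E)) [hP : ∀ x, IsProbabilityMeasure (P x)]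
  (p : ℝ → E → E → ℝ)

variable
  (hnonneg : ∀ t x y, 0 ≤ p t x y)
  (hsymm : ∀ t x y, p t x y = p t y x)
  (hCK : ∀ s t : ℝ, 0 < s → 0 < t → ∀ x y : E,
      p (s + t) x y = ∑' z : E, p s x z * p t z y)
  (hfd : ∀ (x : E) (n : ℕ) (ts : Fin (n + 1) → ℝ) (zs : Fin (n + 1) → E),
      StrictMono ts → 0 < ts 0 →
      P x {ω | ∀ i, ω (ts i) = zs i}
        = ENNReal.ofReal (p (ts 0) x (zs 0) *
            ∏ i : Fin n, p (ts i.succ - ts i.castSucc) (zs i.castSucc) (zs i.succ)))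

include hfd in
lemma single_val (a b : E) (r : ℝ) (hr : 0 < r) :
    P a {ω | ω r = b} = ENNReal.ofReal (p r a b) := by
  haveI : Subsingleton (Fin (0+1)) := ⟨fun a b => Fin.ext (by omega)⟩
  have h := hfd a 0 (fun _ => r) (fun _ => b) (Subsingleton.strictMono _) hr
  have hset : {ω : ℝ → E | ∀ i : Fin 1, ω ((fun _ => r) i) = (fun _ => b) i}
      = {ω : ℝ → E | ω r = b} := by
    ext ω; simp
  rw [hset] at h
  simpa using h

/-- ENNReal-valued weight of a tuple. -/
noncomputable def W (T : ℝ) (a b : E) {k : ℕ} (τ : Fin (k+1) → ℝ) (z : Fin (k+1) → E) : ENNReal :=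
  ENNReal.ofReal (p (τ 0) a (z 0)) *
  (∏ i : Fin k, ENNReal.ofReal (p (τ i.succ - τ i.castSucc) (z i.castSucc) (z i.succ))) *
  ENNReal.ofReal (p (T - τ (Fin.last k)) (z (Fin.last k)) b)

lemma strictMono_snoc {k : ℕ} (τ : Fin (k+1) → ℝ) (T : ℝ) (hmono : StrictMono τ)
    (hlast : ∀ i, τ i < T) : StrictMono (Fin.snoc τ T : Fin (k+2) → ℝ) := by
  rw [Fin.strictMono_iff_lt_succ]
  intro i
  refine Fin.lastCases ?_ ?_ i
  · rw [Fin.succ_last, Fin.snoc_last, Fin.snoc_castSucc]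
    exact hlast _
  · intro j
    rw [Fin.succ_castSucc, Fin.snoc_castSucc, Fin.snoc_castSucc]
    exact hmono Fin.castSucc_lt_succ

include hnonneg hfd in
lemma cylVal (a b : E) (T : ℝ) {k : ℕ} (τ : Fin (k+1) → ℝ) (hmono : StrictMono τ)
    (h0 : 0 < τ 0) (hlast : ∀ i, τ i < T) (z : Fin (k+1) → E) :
    P a {ω | (∀ i, ω (τ i) = z i) ∧ ω T = b} = W p T a b τ z := by
  have hsm : StrictMono (Fin.snoc τ T : Fin (k+2) → ℝ) := strictMono_snoc τ T hmono hlast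
  have h0' : 0 < (Fin.snoc τ T : Fin (k+2) → ℝ) 0 := by
    rw [show (0 : Fin (k+2)) = Fin.castSucc 0 from rfl, Fin.snoc_castSucc]; exact h0
  have h := hfd a (k+1) (Fin.snoc τ T) (Fin.snoc z b) hsm h0'
  have hset : {ω : ℝ → E | ∀ i : Fin (k+1+1), ω ((Fin.snoc τ T : Fin (k+1+1) → ℝ) i) = (Fin.snoc z b : Fin (k+1+1) → E) i}
      = {ω | (∀ i, ω (τ i) = z i) ∧ ω T = b} := by
    ext ω
    constructor
    · intro hω
      refine ⟨fun i => ?_, ?_⟩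
      · have := hω (Fin.castSucc i); simpa [Fin.snoc_castSucc] using this
      · have := hω (Fin.last (k+1)); simpa [Fin.snoc_last] using this
    · rintro ⟨h1, h2⟩ i
      refine Fin.lastCases ?_ ?_ i
      · simpa [Fin.snoc_last] using h2
      · intro j; simpa [Fin.snoc_castSucc] using h1 j
  rw [hset] at h
  rw [h]
  -- now value computation
  have hprod : (∏ i : Fin (k+1),
      p ((Fin.snoc τ T : Fin (k+1+1) → ℝ) i.succ - (Fin.snoc τ T : Fin (k+1+1) → ℝ) i.castSucc)
        ((Fin.snoc z b : Fin (k+1+1) → E) i.castSucc) ((Fin.snoc z b : Fin (k+1+1) → E) i.succ))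
      = (∏ i : Fin k, p (τ i.succ - τ i.castSucc) (z i.castSucc) (z i.succ)) *
        p (T - τ (Fin.last k)) (z (Fin.last k)) b := by
    rw [Fin.prod_univ_castSucc]
    congr 1
    · apply Finset.prod_congr rfl
      intro j _
      simp only [Fin.succ_castSucc, Fin.snoc_castSucc]
    · simp [Fin.succ_last, Fin.snoc_last, Fin.snoc_castSucc]
  have hz0 : (Fin.snoc z b : Fin (k+2) → E) 0 = z 0 := by
    rw [show (0 : Fin (k+2)) = Fin.castSucc 0 from rfl, Fin.snoc_castSucc]
  have ht0 : (Fin.snoc τ T : Fin (k+2) → ℝ) 0 = τ 0 := by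
    rw [show (0 : Fin (k+2)) = Fin.castSucc 0 from rfl, Fin.snoc_castSucc]
  rw [hprod, hz0, ht0]
  rw [ENNReal.ofReal_mul (hnonneg _ _ _),
    ENNReal.ofReal_mul (Finset.prod_nonneg fun i _ => hnonneg _ _ _),
    ENNReal.ofReal_prod_of_nonneg (fun i _ => hnonneg _ _ _), W, mul_assoc]

include hP hfd in
lemma px_le_one (a b : E) (r : ℝ) (hr : 0 < r) : p r a b ≤ 1 := by
  have h := single_val P p hfd a b r hr
  have h2 : P a {ω | ω r = b} ≤ 1 := by
    rw [show (1 : ENNReal) = P a Set.univ from (measure_univ).symm]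
    exact measure_mono (Set.subset_univ _)
  rw [h] at h2
  exact ENNReal.ofReal_le_one.mp h2

include hnonneg hfd hP in
lemma pair_val (a b z : E) (s T : ℝ) (hs : 0 < s) (hT : s < T) :
    P a {ω | ω s = z ∧ ω T = b} = ENNReal.ofReal (p s a z * p (T - s) z b) := by
  haveI : Subsingleton (Fin (0+1)) := ⟨fun a b => Fin.ext (by omega)⟩
  have h := cylVal P p hnonneg hfd a b T (k := 0) (fun _ => s)
    (Subsingleton.strictMono _) hs (fun _ => hT) (fun _ => z)
  have hset : {ω : ℝ → E | (∀ i : Fin 1, ω s = z) ∧ ω T = b} = {ω : ℝ → E | ω s = z ∧ ω T = b} := by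
    ext ω; simp
  rw [hset] at h
  rw [h, W]
  simp [ENNReal.ofReal_mul (hnonneg _ _ _)]

include hP hnonneg hCK hfd in
lemma summable_mul (a b : E) (s u : ℝ) (hs : 0 < s) (hu : 0 < u) :
    Summable fun z => p s a z * p u z b := by
  by_contra hns
  have h0 : p (s + u) a b = 0 := by
    rw [hCK s u hs hu]; exact tsum_eq_zero_of_not_summable hns
  have hz : ∀ z, p s a z * p u z b = 0 := by
    intro z
    have h1 : P a {ω | ω s = z ∧ ω (s + u) = b}
        = ENNReal.ofReal (p s a z * p (s + u - s) z b) :=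
      pair_val P p hnonneg hfd a b z s (s+u) hs (by linarith)
    have h2 : P a {ω | ω s = z ∧ ω (s+u) = b} ≤ P a {ω | ω (s+u) = b} :=
      measure_mono (fun ω h => h.2)
    rw [single_val P p hfd a b (s+u) (by linarith), h0, h1] at h2
    simp only [add_sub_cancel_left] at h2
    simp only [ENNReal.ofReal_zero, nonpos_iff_eq_zero, ENNReal.ofReal_eq_zero] at h2
    exact le_antisymm h2 (mul_nonneg (hnonneg _ _ _) (hnonneg _ _ _))
  exact hns (by simpa [funext hz] using summable_zero)

include hP hnonneg hCK hfd in
lemma eCK (a b : E) (s u : ℝ) (hs : 0 < s) (hu : 0 < u) :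
    ∑' z : E, ENNReal.ofReal (p s a z) * ENNReal.ofReal (p u z b)
      = ENNReal.ofReal (p (s + u) a b) := by
  have := summable_mul P p hnonneg hCK hfd a b s u hs hu
  rw [hCK s u hs hu a b, ENNReal.ofReal_tsum_of_nonneg
    (fun z => mul_nonneg (hnonneg _ _ _) (hnonneg _ _ _)) this]
  exact tsum_congr fun z => (ENNReal.ofReal_mul (hnonneg _ _ _)).symm

include hP hnonneg hsymm hCK hfd in
lemma sq_sum_le (a : E) (q : ℝ) (hq : 0 < q) (F : Finset E) :
    ∑ z ∈ F, (p q a z)^2 ≤ 1 := by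
  have hsum := summable_mul P p hnonneg hCK hfd a a q q hq hq
  have h1 : ∑ z ∈ F, (p q a z)^2 ≤ ∑' z, p q a z * p q z a := by
    have : ∀ z, (p q a z)^2 = p q a z * p q z a := by
      intro z; rw [hsymm q a z]; ring
    calc ∑ z ∈ F, (p q a z)^2 = ∑ z ∈ F, p q a z * p q z a := by
          exact Finset.sum_congr rfl fun z _ => this z
      _ ≤ ∑' z, p q a z * p q z a :=
          Summable.sum_le_tsum F (fun z _ => mul_nonneg (hnonneg _ _ _) (hnonneg _ _ _)) hsum
  have h2 : ∑' z, p q a z * p q z a = p (q + q) a a := (hCK q q hq hq a a).symm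
  have h3 : p (q+q) a a ≤ 1 := px_le_one P p hfd a a (q+q) (by linarith)
  linarith

include hP hnonneg hsymm hCK hfd in
lemma cross_le (a w : E) (q : ℝ) (hq : 0 < q) (hne : w ≠ a) :
    (p q a w)^2 ≤ 1 - (p q a a)^2 := by
  classical
  have h := sq_sum_le P p hnonneg hsymm hCK hfd a q hq {a, w}
  rw [Finset.sum_pair (Ne.symm hne)] at h
  linarith



lemma sqrt_small (c eps : ℝ) (h1 : 1 - eps ≤ c) (h2 : c ≤ 1) :
    Real.sqrt (1 - c^2) ≤ Real.sqrt (2*eps) := Real.sqrt_le_sqrt (by nlinarith)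

lemma eq_zero_of_le_ofReal (a : ENNReal) (h : ∀ eta : ℝ, 0 < eta → a ≤ ENNReal.ofReal eta) : a = 0 := by
  by_contra ha
  rcases eq_or_ne a ⊤ with h1 | h1
  · have := h 1 one_pos
    rw [h1] at this
    exact (lt_irrefl _ (lt_of_le_of_lt this (lt_of_le_of_lt (ENNReal.ofReal_le_one.mpr le_rfl) ENNReal.one_lt_top))).elim
  · have hpos : 0 < a.toReal := ENNReal.toReal_pos ha h1
    have h2 := h (a.toReal/2) (by linarith)
    have h3 : ENNReal.ofReal (a.toReal/2) < a := by
      rw [ENNReal.ofReal_lt_iff_lt_toReal (by linarith) h1]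
      linarith
    exact (lt_irrefl _ (lt_of_le_of_lt h2 h3)).elim

lemma le_of_forall_le_add' (a b : ENNReal) (h : ∀ eta : ℝ, 0 < eta → a ≤ b + ENNReal.ofReal eta) : a ≤ b := by
  refine ENNReal.le_of_forall_pos_le_add (fun ε hε _ => ?_)
  have := h ε (by exact_mod_cast hε)
  simpa [ENNReal.ofReal_coe_nnreal] using this

open scoped Classical in
include hP hnonneg hsymm hCK hfd in
lemma cs_bound (x y : E) (s u : ℝ) (hs : 0 < s) (hu : 0 < u) :
    (∑' z : E, if z = y then 0 else ENNReal.ofReal (p s y z * p u z x))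
      ≤ ENNReal.ofReal (Real.sqrt (1 - (p s y y)^2)) := by
  set M := Real.sqrt (1 - (p s y y)^2) with hM
  have hMnn : 0 ≤ M := Real.sqrt_nonneg _
  set f : E → ℝ := fun z => if z = y then 0 else p s y z * p u z x with hf
  have hfnn : ∀ z, 0 ≤ f z := by
    intro z; by_cases h : z = y <;>
      simp [hf, h, mul_nonneg (hnonneg _ _ _) (hnonneg _ _ _)]
  have hfsum : Summable f := by
    apply Summable.of_nonneg_of_le hfnn _ (summable_mul P p hnonneg hCK hfd y x s u hs hu)
    intro z; by_cases h : z = y <;>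
      simp [hf, h, mul_nonneg (hnonneg _ _ _) (hnonneg _ _ _)]
  have hkey : ∀ F : Finset E, ∑ z ∈ F, f z ≤ M := by
    intro F
    have hCS := Finset.sum_mul_sq_le_sq_mul_sq F (fun z => if z = y then 0 else p s y z)
      (fun z => p u z x)
    have hfg : ∑ z ∈ F, f z = ∑ z ∈ F, (if z = y then 0 else p s y z) * p u z x := by
      refine Finset.sum_congr rfl fun z _ => ?_
      by_cases h : z = y <;> simp [hf, h]
    have hA : ∑ z ∈ F, (if z = y then 0 else p s y z)^2 ≤ 1 - (p s y y)^2 := by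
      have h1 : ∑ z ∈ F, (if z = y then 0 else p s y z)^2
          = ∑ z ∈ F.erase y, (if z = y then 0 else p s y z)^2 := by
        rw [Finset.sum_erase _ (by simp)]
      have h2 : ∑ z ∈ F.erase y, (if z = y then 0 else p s y z)^2
          = ∑ z ∈ F.erase y, (p s y z)^2 := by
        refine Finset.sum_congr rfl fun z hz => ?_
        rw [if_neg (Finset.ne_of_mem_erase hz)]
      have h3 : ∑ z ∈ insert y (F.erase y), (p s y z)^2 ≤ 1 :=
        sq_sum_le P p hnonneg hsymm hCK hfd y s hs _
      rw [Finset.sum_insert (Finset.notMem_erase _ _)] at h3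
      rw [h1, h2]; linarith
    have hB : ∑ z ∈ F, (p u z x)^2 ≤ 1 := by
      have h1 : ∑ z ∈ F, (p u z x)^2 = ∑ z ∈ F, (p u x z)^2 := by
        refine Finset.sum_congr rfl fun z _ => ?_
        rw [hsymm u z x]
      rw [h1]; exact sq_sum_le P p hnonneg hsymm hCK hfd x u hu F
    have hnnfg : 0 ≤ ∑ z ∈ F, f z := Finset.sum_nonneg fun z _ => hfnn z
    have hsq : (∑ z ∈ F, f z)^2 ≤ 1 - (p s y y)^2 := by
      rw [hfg]
      calc (∑ z ∈ F, (if z = y then 0 else p s y z) * p u z x)^2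
          ≤ (∑ z ∈ F, (if z = y then 0 else p s y z)^2) * ∑ z ∈ F, (p u z x)^2 := hCS
        _ ≤ (1 - (p s y y)^2) * 1 := by
            apply mul_le_mul hA hB (Finset.sum_nonneg fun z _ => sq_nonneg _)
            nlinarith [Finset.sum_nonneg (fun z (_ : z ∈ F) => sq_nonneg ((if z = y then 0 else p s y z)))]
        _ = 1 - (p s y y)^2 := by ring
    calc ∑ z ∈ F, f z = Real.sqrt ((∑ z ∈ F, f z)^2) := (Real.sqrt_sq hnnfg).symm
      _ ≤ M := Real.sqrt_le_sqrt hsq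
  have htsum : ∑' z, f z ≤ M := Summable.tsum_le_of_sum_le hfsum hkey
  have heq : (∑' z : E, if z = y then 0 else ENNReal.ofReal (p s y z * p u z x))
      = ENNReal.ofReal (∑' z, f z) := by
    rw [ENNReal.ofReal_tsum_of_nonneg hfnn hfsum]
    refine tsum_congr fun z => ?_
    by_cases h : z = y <;> simp [hf, h]
  rw [heq]
  exact ENNReal.ofReal_le_ofReal htsum



include hP hnonneg hCK hfd in
lemma telescope : ∀ (k : ℕ) (T : ℝ) (τ : Fin (k+1) → ℝ), StrictMono τ → 0 < τ 0 →
    (∀ i, τ i < T) → ∀ a b : E,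
    ∑' z : Fin (k+1) → E, W p T a b τ z = ENNReal.ofReal (p T a b) := by
  intro k
  induction k with
  | zero =>
    intro T τ hmono h0 hlast a b
    have he := ((Equiv.funUnique (Fin 1) E).symm.tsum_eq (f := fun z => W p T a b τ z))
    rw [← he]
    have hW : ∀ c : E, W p T a b τ ((Equiv.funUnique (Fin 1) E).symm c)
        = ENNReal.ofReal (p (τ 0) a c) * ENNReal.ofReal (p (T - τ 0) c b) := by
      intro c
      have : ((Equiv.funUnique (Fin 1) E).symm c : Fin 1 → E) = fun _ => c := rfl
      rw [this, W]
      simp [Fin.last]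
    rw [tsum_congr hW, eCK P p hnonneg hCK hfd a b (τ 0) (T - τ 0) h0 (by linarith [hlast 0])]
    congr 1
    ring_nf
  | succ k ih =>
    intro T τ hmono h0 hlast a b
    have he := ((Fin.consEquiv (fun _ : Fin (k+2) => E)).tsum_eq (f := fun z => W p T a b τ z))
    rw [← he, ENNReal.tsum_prod']
    set τ' : Fin (k+1) → ℝ := fun i => τ i.succ - τ 0 with hτ'
    have hW : ∀ (z0 : E) (w : Fin (k+1) → E),
        W p T a b τ (Fin.consEquiv (fun _ : Fin (k+2) => E) (z0, w))
          = ENNReal.ofReal (p (τ 0) a z0) * W p (T - τ 0) z0 b τ' w := by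
      intro z0 w
      have hc : (Fin.consEquiv (fun _ : Fin (k+2) => E) (z0, w) : Fin (k+2) → E)
          = Fin.cons z0 w := rfl
      rw [hc, W, W]
      have h1 : (Fin.cons z0 w : Fin (k+2) → E) 0 = z0 := rfl
      have h2 : (Fin.cons z0 w : Fin (k+2) → E) (Fin.last (k+1)) = w (Fin.last k) := by
        rw [← Fin.succ_last, Fin.cons_succ]
      have hprod : ∏ i : Fin (k+1),
          ENNReal.ofReal (p (τ i.succ - τ i.castSucc)
            ((Fin.cons z0 w : Fin (k+2) → E) i.castSucc) ((Fin.cons z0 w : Fin (k+2) → E) i.succ))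
          = ENNReal.ofReal (p (τ' 0) z0 (w 0)) *
            ∏ i : Fin k, ENNReal.ofReal (p (τ' i.succ - τ' i.castSucc) (w i.castSucc) (w i.succ)) := by
        rw [Fin.prod_univ_succ]
        refine congrArg₂ (· * ·) ?_ (Finset.prod_congr rfl fun i _ => ?_)
        · simp [hτ', Fin.castSucc_zero, Fin.cons_zero, Fin.cons_succ]
        · have ha1 : (Fin.cons z0 w : Fin (k+2) → E) i.succ.castSucc = w i.castSucc := by
            rw [← Fin.succ_castSucc, Fin.cons_succ]
          have ha2 : (Fin.cons z0 w : Fin (k+2) → E) i.succ.succ = w i.succ := by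
            rw [Fin.cons_succ]
          rw [ha1, ha2]
          have hgap : τ i.succ.succ - τ i.succ.castSucc = τ' i.succ - τ' i.castSucc := by
            simp only [hτ', Fin.succ_castSucc]
            ring
          rw [hgap]
      rw [hprod, h1, h2]
      have hlast' : T - τ (Fin.last (k+1)) = (T - τ 0) - τ' (Fin.last k) := by
        simp only [hτ']
        rw [← Fin.succ_last]
        ring
      rw [hlast']
      ring
    have hτ'mono : StrictMono τ' := fun i j hij => by
      simp only [hτ']
      have := hmono (Fin.succ_lt_succ_iff.mpr hij)
      linarith
    have hτ'0 : 0 < τ' 0 := by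
      simp only [hτ']
      have : τ 0 < τ (0 : Fin (k+1)).succ := hmono (by simp [Fin.lt_def])
      linarith
    have hτ'last : ∀ i, τ' i < T - τ 0 := fun i => by
      simp only [hτ']
      have := hlast i.succ
      linarith
    have hinner : ∀ z0 : E, (∑' w : Fin (k+1) → E,
        W p T a b τ (Fin.consEquiv (fun _ : Fin (k+2) => E) ((z0, w) : E × (Fin (k+1) → E))))
        = ENNReal.ofReal (p (τ 0) a z0) * ENNReal.ofReal (p (T - τ 0) z0 b) := by
      intro z0
      rw [tsum_congr (hW z0), ENNReal.tsum_mul_left,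
        ih (T - τ 0) τ' hτ'mono hτ'0 hτ'last z0 b]
    rw [tsum_congr hinner, eCK P p hnonneg hCK hfd a b (τ 0) (T - τ 0) h0 (by linarith [hlast 0])]
    congr 1
    ring_nf

include hP hnonneg hCK hfd in
lemma ev_val (a b : E) (T : ℝ) {k : ℕ} (τ : Fin (k+1) → ℝ) (hmono : StrictMono τ)
    (h0 : 0 < τ 0) (hlast : ∀ i, τ i < T) (Z : Set (Fin (k+1) → E)) :
    P a {ω | (fun i => ω (τ i)) ∈ Z ∧ ω T = b} = ∑' z : Z, W p T a b τ (z : Fin (k+1) → E) := by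
  have cover : ∀ (Y : Set (Fin (k+1) → E)),
      P a {ω | (fun i => ω (τ i)) ∈ Y ∧ ω T = b} ≤ ∑' z : Y, W p T a b τ (z : Fin (k+1) → E) := by
    intro Y
    have hsub : {ω : ℝ → E | (fun i => ω (τ i)) ∈ Y ∧ ω T = b}
        ⊆ ⋃ z : Y, {ω | (∀ i, ω (τ i) = (z : Fin (k+1) → E) i) ∧ ω T = b} := by
      intro ω hω
      exact Set.mem_iUnion.mpr ⟨⟨_, hω.1⟩, ⟨fun i => rfl, hω.2⟩⟩
    calc P a {ω | (fun i => ω (τ i)) ∈ Y ∧ ω T = b}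
        ≤ P a (⋃ z : Y, {ω | (∀ i, ω (τ i) = (z : Fin (k+1) → E) i) ∧ ω T = b}) :=
          measure_mono hsub
      _ ≤ ∑' z : Y, P a {ω | (∀ i, ω (τ i) = (z : Fin (k+1) → E) i) ∧ ω T = b} :=
          measure_iUnion_le _
      _ = ∑' z : Y, W p T a b τ (z : Fin (k+1) → E) :=
          tsum_congr fun z => cylVal P p hnonneg hfd a b T τ hmono h0 hlast _
  have hsplit : (∑' z : Z, W p T a b τ (z : Fin (k+1) → E))
      + (∑' z : ↥(Zᶜ), W p T a b τ (z : Fin (k+1) → E)) = ENNReal.ofReal (p T a b) := by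
    rw [Summable.tsum_add_tsum_compl (s := Z) ENNReal.summable ENNReal.summable]
    exact telescope P p hnonneg hCK hfd k T τ hmono h0 hlast a b
  have h1 := cover Z
  have h2 := cover Zᶜ
  have hT : 0 < T := lt_trans h0 (hlast 0)
  have htot : ENNReal.ofReal (p T a b)
      ≤ P a {ω | (fun i => ω (τ i)) ∈ Z ∧ ω T = b} + P a {ω | (fun i => ω (τ i)) ∈ Zᶜ ∧ ω T = b} := by
    rw [← single_val P p hfd a b T hT]
    refine le_trans (measure_mono ?_) (measure_union_le _ _)
    intro ω hω
    by_cases h : (fun i => ω (τ i)) ∈ Z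
    · exact Or.inl ⟨h, hω⟩
    · exact Or.inr ⟨h, hω⟩
  have hfin : (∑' z : ↥(Zᶜ), W p T a b τ (z : Fin (k+1) → E)) ≠ ⊤ := by
    refine ne_top_of_le_ne_top ?_ (le_add_self.trans hsplit.le)
    exact ENNReal.ofReal_ne_top
  have hchain : (∑' z : Z, W p T a b τ (z : Fin (k+1) → E))
        + (∑' z : ↥(Zᶜ), W p T a b τ (z : Fin (k+1) → E))
      ≤ P a {ω | (fun i => ω (τ i)) ∈ Z ∧ ω T = b}
        + (∑' z : ↥(Zᶜ), W p T a b τ (z : Fin (k+1) → E)) := by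
    rw [hsplit]
    exact htot.trans (add_le_add le_rfl h2)
  exact le_antisymm h1 ((ENNReal.add_le_add_iff_right hfin).mp hchain)


include hsymm in
lemma Wrev (T : ℝ) (a b : E) {k : ℕ} (τ : Fin (k+1) → ℝ) (z : Fin (k+1) → E) :
    W p T a b τ (fun i => z i.rev) = W p T b a (fun i => T - τ i.rev) z := by
  simp only [W]
  rw [Fin.rev_zero, Fin.rev_last]
  have hmid : (∏ i : Fin k, ENNReal.ofReal
        (p (τ i.succ - τ i.castSucc) (z i.castSucc.rev) (z i.succ.rev)))
      = ∏ i : Fin k, ENNReal.ofReal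
        (p ((T - τ i.succ.rev) - (T - τ i.castSucc.rev)) (z i.castSucc) (z i.succ)) := by
    calc (∏ i : Fin k, ENNReal.ofReal
          (p (τ i.succ - τ i.castSucc) (z i.castSucc.rev) (z i.succ.rev)))
        = ∏ i : Fin k, ENNReal.ofReal
          (p (τ (Fin.revPerm i).succ - τ (Fin.revPerm i).castSucc)
            (z (Fin.revPerm i).castSucc.rev) (z (Fin.revPerm i).succ.rev)) :=
          (Equiv.prod_comp (Fin.revPerm : Equiv.Perm (Fin k))
            (fun i => ENNReal.ofReal
              (p (τ i.succ - τ i.castSucc) (z i.castSucc.rev) (z i.succ.rev)))).symm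
      _ = ∏ i : Fin k, ENNReal.ofReal
          (p ((T - τ i.succ.rev) - (T - τ i.castSucc.rev)) (z i.castSucc) (z i.succ)) := by
          refine Finset.prod_congr rfl fun i _ => ?_
          have e1 : (Fin.revPerm i : Fin k) = i.rev := rfl
          rw [e1]
          simp only [Fin.rev_castSucc, Fin.rev_succ, Fin.rev_rev]
          rw [hsymm]
          congr 1
          ring
  rw [hmid, hsymm _ b (z 0), hsymm _ (z (Fin.last k)) a,
    show T - (T - τ 0) = τ 0 by ring]
  ring


include hP hnonneg hsymm hCK hfd in
lemma finset_rev (C : Set E) (t : ℝ) (F : Finset ℝ) (hne : F.Nonempty)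
    (hF : ∀ s ∈ F, s ∈ Set.Ioo 0 t) (a b : E) :
    P a {ω | ω t = b ∧ ∃ s ∈ F, ω s ∈ C}
      = P b {ω | ω t = a ∧ ∃ s ∈ F.image (fun r => t - r), ω s ∈ C} := by
  classical
  obtain ⟨k, hk⟩ : ∃ k, F.card = k + 1 :=
    ⟨F.card - 1, (Nat.succ_pred_eq_of_pos (Finset.card_pos.mpr hne)).symm⟩
  set e := F.orderIsoOfFin hk with he
  set τ : Fin (k+1) → ℝ := fun i => (e i : ℝ) with hτ
  have hmem : ∀ i, τ i ∈ F := fun i => (e i).2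
  have hmono : StrictMono τ := fun i j hij => by
    have h := e.strictMono hij
    exact_mod_cast h
  have hsurj : ∀ s ∈ F, ∃ i, τ i = s := fun s hs => by
    obtain ⟨i, hi⟩ := e.surjective ⟨s, hs⟩
    exact ⟨i, congrArg Subtype.val hi⟩
  have h0 : 0 < τ 0 := (hF _ (hmem 0)).1
  have hlastlt : ∀ i, τ i < t := fun i => (hF _ (hmem i)).2
  set Z : Set (Fin (k+1) → E) := {z | ∃ i, z i ∈ C} with hZ
  have hev1 : {ω : ℝ → E | ω t = b ∧ ∃ s ∈ F, ω s ∈ C}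
      = {ω | (fun i => ω (τ i)) ∈ Z ∧ ω t = b} := by
    ext ω; constructor
    · rintro ⟨h1, s, hs, hC⟩
      obtain ⟨i, hi⟩ := hsurj s hs
      exact ⟨⟨i, by show ω (τ i) ∈ C; rw [hi]; exact hC⟩, h1⟩
    · rintro ⟨⟨i, hi⟩, h1⟩
      exact ⟨h1, τ i, hmem i, hi⟩
  set τ' : Fin (k+1) → ℝ := fun i => t - τ i.rev with hτ'
  have hmono' : StrictMono τ' := fun i j hij => by
    have h : τ j.rev < τ i.rev := hmono (Fin.rev_lt_rev.mpr hij)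
    simp only [hτ']
    linarith
  have h0' : 0 < τ' 0 := by
    simp only [hτ']
    linarith [hlastlt (Fin.rev 0)]
  have hlast' : ∀ i, τ' i < t := fun i => by
    simp only [hτ']
    linarith [(hF _ (hmem i.rev)).1]
  have hev2 : {ω : ℝ → E | ω t = a ∧ ∃ s ∈ F.image (fun r => t - r), ω s ∈ C}
      = {ω | (fun i => ω (τ' i)) ∈ Z ∧ ω t = a} := by
    ext ω; constructor
    · rintro ⟨h1, s, hs, hC⟩
      obtain ⟨r, hr, hrs⟩ := Finset.mem_image.mp hs
      obtain ⟨i, hi⟩ := hsurj r hr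
      refine ⟨⟨i.rev, ?_⟩, h1⟩
      show ω (τ' i.rev) ∈ C
      have hts : τ' i.rev = s := by
        simp only [hτ', Fin.rev_rev, hi]
        exact hrs
      rw [hts]
      exact hC
    · rintro ⟨⟨i, hi⟩, h1⟩
      exact ⟨h1, τ' i, Finset.mem_image.mpr ⟨τ i.rev, hmem _, rfl⟩, hi⟩
  rw [hev1, hev2,
    ev_val P p hnonneg hCK hfd a b t τ hmono h0 hlastlt Z,
    ev_val P p hnonneg hCK hfd b a t τ' hmono' h0' hlast' Z]
  have hinv : ∀ z : Fin (k+1) → E, z ∈ Z → (fun i => z i.rev) ∈ Z := by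
    rintro z ⟨i, hi⟩
    exact ⟨i.rev, by show z i.rev.rev ∈ C; rwa [Fin.rev_rev]⟩
  set σ : ↥Z ≃ ↥Z :=
    { toFun := fun z => ⟨fun i => (z : Fin (k+1) → E) i.rev, hinv _ z.2⟩
      invFun := fun z => ⟨fun i => (z : Fin (k+1) → E) i.rev, hinv _ z.2⟩
      left_inv := fun z => by
        apply Subtype.ext
        funext i
        simp [Fin.rev_rev]
      right_inv := fun z => by
        apply Subtype.ext
        funext i
        simp [Fin.rev_rev] } with hσ
  calc (∑' z : ↥Z, W p t a b τ (z : Fin (k+1) → E))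
      = ∑' z : ↥Z, W p t a b τ ((σ z : ↥Z) : Fin (k+1) → E) := (σ.tsum_eq _).symm
    _ = ∑' z : ↥Z, W p t b a τ' (z : Fin (k+1) → E) := by
        refine tsum_congr fun z => ?_
        exact Wrev p hsymm t a b τ (z : Fin (k+1) → E)


variable (hstep : ∀ x : E, ∀ᵐ ω ∂(P x), ∀ s : ℝ, 0 ≤ s →
      ∃ ε > (0 : ℝ), ∀ u ∈ Set.Ico s (s + ε), ω u = ω s)

include hP hnonneg hsymm hCK hfd hstep in
lemma std (y : E) (ε : ℝ) (hε : 0 < ε) :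
    ∃ δ > (0:ℝ), ∀ q : ℝ, 0 < q → q ≤ δ → 1 - ε < p q y y := by
  classical
  by_contra hcon
  push_neg at hcon
  set BadP : E → Prop := fun z =>
    ∃ ε' : ℝ, 0 < ε' ∧ ∀ δ : ℝ, 0 < δ → ∃ q, 0 < q ∧ q ≤ δ ∧ p q z z ≤ 1 - ε' with hBadP
  have hbady : BadP y := by
    refine ⟨ε, hε, fun δ hδ => ?_⟩
    obtain ⟨q, hq1, hq2, hq3⟩ := hcon δ hδ
    exact ⟨q, hq1, hq2, hq3⟩
  set eb : E → ℝ := fun z => if h : BadP z then h.choose else 1 with heb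
  have heb' : ∀ z, BadP z → 0 < eb z ∧
      ∀ δ : ℝ, 0 < δ → ∃ q, 0 < q ∧ q ≤ δ ∧ p q z z ≤ 1 - eb z := by
    intro z h
    simp only [heb, dif_pos h]
    exact ⟨h.choose_spec.1, h.choose_spec.2⟩
  have hg : ∀ z : E, ∀ j : ℕ, ∃ gq : ℝ,
      0 < gq ∧ gq ≤ 1/((j:ℝ)+1) ∧ (BadP z → p gq z z ≤ 1 - eb z) := by
    intro z j
    by_cases h : BadP z
    · obtain ⟨q, hq1, hq2, hq3⟩ := (heb' z h).2 (1/((j:ℝ)+1)) (by positivity)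
      exact ⟨q, hq1, hq2, fun _ => hq3⟩
    · exact ⟨1/((j:ℝ)+1), by positivity, le_rfl, fun hb => absurd hb h⟩
  set g : E → ℕ → ℝ := fun z j => (hg z j).choose with hgdef
  have hgpos : ∀ z j, 0 < g z j := fun z j => (hg z j).choose_spec.1
  have hgle : ∀ z j, g z j ≤ 1/((j:ℝ)+1) := fun z j => (hg z j).choose_spec.2.1
  have hgbad : ∀ z j, BadP z → p (g z j) z z ≤ 1 - eb z :=
    fun z j => (hg z j).choose_spec.2.2
  set Qs : Set ℝ := {q | (∃ kk : ℕ, q = 1/((kk:ℝ)+1)) ∨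
    ∃ z : E, ∃ jj ii : ℕ, q = ((ii:ℝ)+1) * g z jj} with hQs
  have hQpos : ∀ q ∈ Qs, 0 < q := by
    rintro q (⟨kk, rfl⟩ | ⟨z, jj, ii, rfl⟩)
    · positivity
    · have := hgpos z jj
      positivity
  set H : E → ℕ → Set (ℝ → E) :=
    fun z m => {ω | ∀ q, q ∈ Qs → q ≤ 1/((m:ℝ)+1) → ω q = z} with hH
  have hcov : ∀ᵐ ω ∂(P y), ∃ m : ℕ, ∃ z, ω ∈ H z m := by
    filter_upwards [hstep y] with ω hω
    obtain ⟨ε₀, hε₀, hc⟩ := hω 0 le_rfl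
    obtain ⟨m, hm⟩ : ∃ m : ℕ, 1/((m:ℝ)+1) < ε₀ := exists_nat_one_div_lt hε₀
    refine ⟨m, ω 0, fun q hq hq2 => ?_⟩
    exact hc q ⟨(hQpos q hq).le, by rw [zero_add]; exact lt_of_le_of_lt hq2 hm⟩
  have hH0 : ∀ z m, P y (H z m) = 0 := by
    intro z m
    by_cases hb : BadP z
    · apply eq_zero_of_le_ofReal
      intro η hη
      have hεb1 := (heb' z hb).1
      have hεble : eb z ≤ 1 := by
        obtain ⟨q, hq1, _, hq3⟩ := (heb' z hb).2 1 one_pos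
        nlinarith [hnonneg q z z]
      obtain ⟨n, hn⟩ := exists_pow_lt_of_lt_one hη (show 1 - eb z < 1 by linarith)
      set j := (n+1)*(m+1) with hj
      set gq := g z j with hgq
      have hgq0 : 0 < gq := hgpos z j
      set ts : Fin (n+1) → ℝ := fun i => ((i:ℕ)+1 : ℝ) * gq with hts
      have htsmono : StrictMono ts := by
        intro i1 i2 h12
        simp only [hts]
        have : ((i1:ℕ):ℝ) < ((i2:ℕ):ℝ) := by exact_mod_cast h12
        nlinarith
      have hts0 : 0 < ts 0 := by
        simp only [hts]
        norm_num
        exact hgq0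
      have hsub : H z m ⊆ {ω | ∀ i, ω (ts i) = (fun _ : Fin (n+1) => z) i} := by
        intro ω hω i
        apply hω
        · exact Or.inr ⟨z, j, (i:ℕ), rfl⟩
        · simp only [hts]
          have h1 : ((i:ℕ)+1 : ℝ) ≤ (n+1 : ℝ) := by
            have := i.isLt
            exact_mod_cast Nat.succ_le_succ (Nat.lt_succ_iff.mp this)
          have h2 : ((i:ℕ)+1 : ℝ) * gq ≤ ((n:ℝ)+1) * (1/((j:ℝ)+1)) := by
            have := hgle z j
            nlinarith
          have h3 : ((n:ℝ)+1) * (1/((j:ℝ)+1)) ≤ 1/((m:ℝ)+1) := by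
            have hjval : ((j:ℝ)) = ((n:ℝ)+1)*((m:ℝ)+1) := by
              simp only [hj]
              push_cast
              ring
            rw [hjval, mul_one_div, div_le_div_iff₀ (by positivity) (by positivity)]
            nlinarith
          linarith
      have hval := hfd y n ts (fun _ => z) htsmono hts0
      have hprod : (∏ i : Fin n,
          p (ts i.succ - ts i.castSucc) ((fun _ : Fin (n+1) => z) i.castSucc)
            ((fun _ : Fin (n+1) => z) i.succ)) = (p gq z z)^n := by
        have : ∀ i : Fin n, ts i.succ - ts i.castSucc = gq := by
          intro i
          simp only [hts, Fin.val_succ, Fin.coe_castSucc]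
          push_cast
          ring
        calc (∏ i : Fin n, p (ts i.succ - ts i.castSucc) ((fun _ : Fin (n+1) => z) i.castSucc)
              ((fun _ : Fin (n+1) => z) i.succ))
            = ∏ _i : Fin n, p gq z z := Finset.prod_congr rfl fun i _ => by rw [this i]
          _ = (p gq z z)^n := by
              rw [Finset.prod_const, Finset.card_univ, Fintype.card_fin]
      calc P y (H z m) ≤ P y {ω | ∀ i, ω (ts i) = (fun _ : Fin (n+1) => z) i} :=
            measure_mono hsub
        _ = ENNReal.ofReal (p (ts 0) y z * (p gq z z)^n) := by rw [hval, hprod]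
        _ ≤ ENNReal.ofReal η := by
            apply ENNReal.ofReal_le_ofReal
            have hb1 : p (ts 0) y z ≤ 1 := px_le_one P p hfd y z (ts 0) hts0
            have hb2 : (p gq z z)^n ≤ (1 - eb z)^n := by
              apply pow_le_pow_left₀ (hnonneg _ _ _) (hgbad z j hb)
            have hb3 : (0:ℝ) ≤ (p gq z z)^n := pow_nonneg (hnonneg _ _ _) n
            nlinarith [hnonneg (ts 0) y z]
    · by_cases hzy : z = y
      · exact absurd hbady (hzy ▸ hb)
      · apply eq_zero_of_le_ofReal
        intro η hη
        have hgood : ∀ ε' : ℝ, 0 < ε' → ∃ δ, 0 < δ ∧ ∀ q, 0 < q → q ≤ δ → 1 - ε' < p q z z := by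
          intro ε' hε'
          by_contra hcon2
          push_neg at hcon2
          refine hb ⟨ε', hε', fun δ hδ => ?_⟩
          obtain ⟨q, hq1, hq2, hq3⟩ := hcon2 δ hδ
          exact ⟨q, hq1, hq2, hq3⟩
        obtain ⟨δ, hδ, hδp⟩ := hgood (η^2/2) (by positivity)
        obtain ⟨kk, hkk⟩ : ∃ kk : ℕ, 1/((kk:ℝ)+1) < min δ (1/((m:ℝ)+1)) := by
          apply exists_nat_one_div_lt
          exact lt_min hδ (by positivity)
        set q := 1/((kk:ℝ)+1) with hq
        have hq0 : 0 < q := by positivity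
        have hqδ : q ≤ δ := le_of_lt (lt_of_lt_of_le hkk (min_le_left _ _))
        have hqm : q ≤ 1/((m:ℝ)+1) := le_of_lt (lt_of_lt_of_le hkk (min_le_right _ _))
        have hsub : H z m ⊆ {ω | ω q = z} := fun ω hω => hω q (Or.inl ⟨kk, rfl⟩) hqm
        have hclose : 1 - η^2/2 < p q z z := hδp q hq0 hqδ
        have hple : p q z z ≤ 1 := px_le_one P p hfd z z q hq0
        have hcr : (p q z y)^2 ≤ 1 - (p q z z)^2 :=
          cross_le P p hnonneg hsymm hCK hfd z y q hq0 (Ne.symm hzy)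
        have hbound : p q y z ≤ η := by
          have h1 : p q y z = p q z y := hsymm q y z
          have h2 : p q z y ≤ Real.sqrt (1 - (p q z z)^2) := by
            calc p q z y = Real.sqrt ((p q z y)^2) := (Real.sqrt_sq (hnonneg _ _ _)).symm
              _ ≤ Real.sqrt (1 - (p q z z)^2) := Real.sqrt_le_sqrt hcr
          have h3 : Real.sqrt (1 - (p q z z)^2) ≤ Real.sqrt (2*(η^2/2)) :=
            sqrt_small _ _ (by linarith) hple
          have h4 : Real.sqrt (2*(η^2/2)) = η := by
            rw [show 2*(η^2/2) = η^2 by ring]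
            exact Real.sqrt_sq hη.le
          linarith
        calc P y (H z m) ≤ P y {ω | ω q = z} := measure_mono hsub
          _ = ENNReal.ofReal (p q y z) := single_val P p hfd y z q hq0
          _ ≤ ENNReal.ofReal η := ENNReal.ofReal_le_ofReal hbound
  have hun : P y (⋃ m : ℕ, ⋃ z : E, H z m) = 0 := by
    refine le_antisymm ?_ zero_le
    calc P y (⋃ m : ℕ, ⋃ z : E, H z m) ≤ ∑' m : ℕ, P y (⋃ z : E, H z m) :=
          measure_iUnion_le _
      _ ≤ ∑' m : ℕ, ∑' z : E, P y (H z m) :=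
          ENNReal.tsum_le_tsum fun m => measure_iUnion_le _
      _ = 0 := by simp [hH0]
  have hbad0 : P y {ω | ¬ ∃ m : ℕ, ∃ z, ω ∈ H z m} = 0 := by
    have := hcov
    rw [MeasureTheory.ae_iff] at this
    exact this
  have hcontra : (1:ENNReal) ≤ 0 := by
    calc (1:ENNReal) = P y Set.univ := measure_univ.symm
      _ ≤ P y ((⋃ m : ℕ, ⋃ z : E, H z m) ∪ {ω | ¬ ∃ m : ℕ, ∃ z, ω ∈ H z m}) := by
          apply measure_mono
          intro ω _
          by_cases h : ∃ m : ℕ, ∃ z, ω ∈ H z m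
          · obtain ⟨m, z, hmem⟩ := h
            exact Or.inl (Set.mem_iUnion.mpr ⟨m, Set.mem_iUnion.mpr ⟨z, hmem⟩⟩)
          · exact Or.inr h
      _ ≤ P y (⋃ m : ℕ, ⋃ z : E, H z m) + P y {ω | ¬ ∃ m : ℕ, ∃ z, ω ∈ H z m} :=
          measure_union_le _ _
      _ = 0 := by rw [hun, hbad0, add_zero]
  simp at hcontra

end TRI


open MeasureTheory

/-- Time reversal identity for a symmetric Markov chain: if the transition
kernel `p` is symmetric and satisfies Chapman–Kolmogorov, and `P x` is the law
of the chain started at `x` (with right-continuous step paths, and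
finite-dimensional distributions given by `p`), then the probability of being at
`y` at time `t` having last visited `C` during `[t/2, t]` equals the
probability, started from `y`, of being at `x` at time `t` having first hit `C`
by time `t/2`. -/
theorem time_reversal_identity {E : Type*} [Countable E] [MeasurableSpace E]
    (P : E → Measure (ℝ → E)) [∀ x, IsProbabilityMeasure (P x)]
    (p : ℝ → E → E → ℝ)
    (hnonneg : ∀ t x y, 0 ≤ p t x y)
    (hsymm : ∀ t x y, p t x y = p t y x)
    (hCK : ∀ s t : ℝ, 0 < s → 0 < t → ∀ x y : E,
      p (s + t) x y = ∑' z : E, p s x z * p t z y)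
    (hfd : ∀ (x : E) (n : ℕ) (ts : Fin (n + 1) → ℝ) (zs : Fin (n + 1) → E),
      StrictMono ts → 0 < ts 0 →
      P x {ω | ∀ i, ω (ts i) = zs i}
        = ENNReal.ofReal (p (ts 0) x (zs 0) *
            ∏ i : Fin n, p (ts i.succ - ts i.castSucc) (zs i.castSucc) (zs i.succ)))
    (hstep : ∀ x : E, ∀ᵐ ω ∂(P x), ∀ s : ℝ, 0 ≤ s →
      ∃ ε > (0 : ℝ), ∀ u ∈ Set.Ico s (s + ε), ω u = ω s)
    (C : Set E) (t : ℝ) (ht : 0 < t) (x y : E) :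
    P x {ω | ω t = y ∧ ∃ s ∈ Set.Icc (t / 2) t, ω s ∈ C}
      = P y {ω | ω t = x ∧ ∃ s ∈ Set.Icc (0 : ℝ) (t / 2), ω s ∈ C} := by
  classical
  have ht2 : 0 < t/2 := by linarith
  obtain ⟨qe, hqe⟩ := exists_surjective_nat ℚ
  set d : ℕ → ℝ := fun n => if n = 0 then t/2 else
    (if (0:ℚ) < qe (n-1) ∧ qe (n-1) < 1 then t/2 + t/2 * ((qe (n-1) : ℝ)) else t/2) with hd
  have hd0 : d 0 = t/2 := by simp [hd]
  have hrange : ∀ n, t/2 ≤ d n ∧ d n < t := by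
    intro n
    rcases Nat.eq_zero_or_pos n with h | h
    · rw [h, hd0]; exact ⟨le_rfl, by linarith⟩
    · have hn0 : n ≠ 0 := Nat.pos_iff_ne_zero.mp h
      by_cases hc : (0:ℚ) < qe (n-1) ∧ qe (n-1) < 1
      · have h1 : (0:ℝ) < ((qe (n-1) : ℝ)) := by exact_mod_cast hc.1
        have h2 : ((qe (n-1) : ℝ)) < 1 := by exact_mod_cast hc.2
        simp only [hd]
        rw [if_neg hn0, if_pos hc]
        constructor <;> nlinarith
      · simp only [hd]
        rw [if_neg hn0, if_neg hc]
        exact ⟨le_rfl, by linarith⟩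
  have hdense : ∀ a b : ℝ, t/2 ≤ a → a < b → b ≤ t → ∃ n, a < d n ∧ d n < b := by
    intro a b ha hab hb
    have hq : (a - t/2)/(t/2) < (b - t/2)/(t/2) := by
      rw [div_lt_div_iff₀ ht2 ht2]
      nlinarith
    obtain ⟨q, hq1, hq2⟩ := exists_rat_btwn hq
    obtain ⟨m, hm⟩ := hqe q
    have hq0 : (0:ℚ) < q := by
      have h0 : (0:ℝ) ≤ (a - t/2)/(t/2) := div_nonneg (by linarith) ht2.le
      have : (0:ℝ) < (q:ℝ) := lt_of_le_of_lt h0 hq1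
      exact_mod_cast this
    have hq1' : q < 1 := by
      have hble : (b - t/2)/(t/2) ≤ 1 := by rw [div_le_one ht2]; linarith
      have : ((q:ℝ)) < 1 := lt_of_lt_of_le hq2 hble
      exact_mod_cast this
    have hcond : (0:ℚ) < qe ((m+1)-1) ∧ qe ((m+1)-1) < 1 := by
      simp only [Nat.add_sub_cancel, hm]
      exact ⟨hq0, hq1'⟩
    have hdm : d (m+1) = t/2 + t/2 * ((q:ℝ)) := by
      simp only [hd]
      rw [if_neg (Nat.add_one_ne_zero m), if_pos hcond]
      simp only [Nat.add_sub_cancel, hm]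
    refine ⟨m+1, ?_, ?_⟩
    · rw [hdm]
      have : a - t/2 < t/2 * (q:ℝ) := by
        rw [div_lt_iff₀ ht2] at hq1
        nlinarith
      linarith
    · rw [hdm]
      have : t/2 * (q:ℝ) < b - t/2 := by
        rw [lt_div_iff₀ ht2] at hq2
        nlinarith
      linarith
  set Φ : Set (ℝ → E) := {ω | ∀ s : ℝ, 0 ≤ s →
    ∃ ε > (0:ℝ), ∀ u ∈ Set.Ico s (s+ε), ω u = ω s} with hΦ
  have hΦbad : ∀ c : E, P c {ω | ω ∉ Φ} = 0 := by
    intro c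
    have h := hstep c
    rw [MeasureTheory.ae_iff] at h
    exact h
  have hae : ∀ (c : E) (S U : Set (ℝ → E)), U ⊆ S → (S ∩ Φ ⊆ U) → P c S = P c U := by
    intro c S U h1 h2
    refine le_antisymm ?_ (measure_mono h1)
    calc P c S ≤ P c (U ∪ {ω | ω ∉ Φ}) := by
          apply measure_mono
          intro ω hω
          by_cases h : ω ∈ Φ
          · exact Or.inl (h2 ⟨hω, h⟩)
          · exact Or.inr h
      _ ≤ P c U + P c {ω | ω ∉ Φ} := measure_union_le _ _
      _ = P c U := by rw [hΦbad c, add_zero]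
  by_cases hyC : y ∈ C
  · -- case y ∈ C
    have hA : {ω : ℝ → E | ω t = y ∧ ∃ s ∈ Set.Icc (t/2) t, ω s ∈ C} = {ω | ω t = y} := by
      ext ω
      constructor
      · rintro ⟨h1, _⟩; exact h1
      · intro h1; exact ⟨h1, t, ⟨by linarith, le_refl t⟩, by rw [h1]; exact hyC⟩
    rw [hA, TRI.single_val P p hfd x y t ht]
    have hBle : P y {ω : ℝ → E | ω t = x ∧ ∃ s ∈ Set.Icc (0:ℝ) (t/2), ω s ∈ C}
        ≤ ENNReal.ofReal (p t y x) := by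
      rw [← TRI.single_val P p hfd y x t ht]
      exact measure_mono fun ω hω => hω.1
    have hBge : ENNReal.ofReal (p t y x)
        ≤ P y {ω : ℝ → E | ω t = x ∧ ∃ s ∈ Set.Icc (0:ℝ) (t/2), ω s ∈ C} := by
      apply TRI.le_of_forall_le_add'
      intro η hη
      obtain ⟨δ, hδ0, hδ⟩ := TRI.std P p hnonneg hsymm hCK hfd hstep y (η^2/2) (by positivity)
      obtain ⟨n, hn1, hn2⟩ := hdense (max (t/2) (t - δ)) t (le_max_left _ _)
        (max_lt (by linarith) (by linarith)) le_rfl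
      set e := t - d n with he
      have he0 : 0 < e := by rw [he]; linarith [(hrange n).2]
      have heδ : e ≤ δ := by
        rw [he]
        have := lt_of_le_of_lt (le_max_right (t/2) (t-δ)) hn1
        linarith
      have heth : e ≤ t/2 := by
        rw [he]
        have := lt_of_le_of_lt (le_max_left (t/2) (t-δ)) hn1
        linarith
      have hp1 : 1 - η^2/2 < p e y y := hδ e he0 heδ
      have hJ : P y {ω : ℝ → E | ω e ∉ C ∧ ω t = x} ≤ ENNReal.ofReal η := by
        have hsub : {ω : ℝ → E | ω e ∉ C ∧ ω t = x} ⊆ ⋃ z : E,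
            (if z ∈ C then (∅ : Set (ℝ → E)) else {ω | ω e = z ∧ ω t = x}) := by
          intro ω hω
          refine Set.mem_iUnion.mpr ⟨ω e, ?_⟩
          rw [if_neg hω.1]
          exact ⟨rfl, hω.2⟩
        calc P y {ω : ℝ → E | ω e ∉ C ∧ ω t = x}
            ≤ ∑' z : E, P y (if z ∈ C then (∅ : Set (ℝ → E)) else {ω | ω e = z ∧ ω t = x}) :=
              (measure_mono hsub).trans (measure_iUnion_le _)
          _ ≤ ∑' z : E, (if z = y then 0 else ENNReal.ofReal (p e y z * p (t - e) z x)) := by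
              apply ENNReal.tsum_le_tsum
              intro z
              by_cases hzC : z ∈ C
              · rw [if_pos hzC]; simp
              · rw [if_neg hzC, TRI.pair_val P p hnonneg hfd y x z e t he0 (by linarith)]
                have hzy : ¬ (z = y) := fun h => hzC (h ▸ hyC)
                rw [if_neg hzy]
          _ ≤ ENNReal.ofReal (Real.sqrt (1 - (p e y y)^2)) :=
              TRI.cs_bound P p hnonneg hsymm hCK hfd x y e (t - e) he0 (by linarith)
          _ ≤ ENNReal.ofReal η := by
              apply ENNReal.ofReal_le_ofReal
              calc Real.sqrt (1 - (p e y y)^2)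
                  ≤ Real.sqrt (2*(η^2/2)) :=
                    TRI.sqrt_small _ _ (by linarith) (TRI.px_le_one P p hfd y y e he0)
                _ = η := by
                    rw [show 2*(η^2/2) = η^2 by ring]
                    exact Real.sqrt_sq hη.le
      have hsplit : {ω : ℝ → E | ω t = x}
          ⊆ {ω : ℝ → E | ω t = x ∧ ∃ s ∈ Set.Icc (0:ℝ) (t/2), ω s ∈ C}
            ∪ {ω : ℝ → E | ω e ∉ C ∧ ω t = x} := by
        intro ω hω
        by_cases h : ω e ∈ C
        · exact Or.inl ⟨hω, e, ⟨he0.le, heth⟩, h⟩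
        · exact Or.inr ⟨h, hω⟩
      calc ENNReal.ofReal (p t y x) = P y {ω : ℝ → E | ω t = x} :=
            (TRI.single_val P p hfd y x t ht).symm
        _ ≤ P y {ω : ℝ → E | ω t = x ∧ ∃ s ∈ Set.Icc (0:ℝ) (t/2), ω s ∈ C}
            + P y {ω : ℝ → E | ω e ∉ C ∧ ω t = x} :=
            (measure_mono hsplit).trans (measure_union_le _ _)
        _ ≤ _ + ENNReal.ofReal η := add_le_add le_rfl hJ
    rw [le_antisymm hBle hBge, hsymm t x y]
  · -- case y ∉ C
    set FN : ℕ → Finset ℝ := fun N => (Finset.range (N+1)).image d with hFN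
    have hFmem : ∀ N n, n ≤ N → d n ∈ FN N := by
      intro N n hn
      exact Finset.mem_image.mpr ⟨n, Finset.mem_range.mpr (Nat.lt_succ_of_le hn), rfl⟩
    have hFIoo : ∀ N, ∀ s ∈ FN N, s ∈ Set.Ioo 0 t := by
      intro N s hs
      obtain ⟨n, _, rfl⟩ := Finset.mem_image.mp hs
      exact ⟨lt_of_lt_of_le ht2 (hrange n).1, (hrange n).2⟩
    have hFne : ∀ N, (FN N).Nonempty := fun N => ⟨d 0, hFmem N 0 (Nat.zero_le N)⟩
    set AN : ℕ → Set (ℝ → E) := fun N => {ω | ω t = y ∧ ∃ s ∈ FN N, ω s ∈ C} with hAN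
    set BN : ℕ → Set (ℝ → E) :=
      fun N => {ω | ω t = x ∧ ∃ s ∈ (FN N).image (fun r => t - r), ω s ∈ C} with hBN
    have hANBN : ∀ N, P x (AN N) = P y (BN N) := fun N =>
      TRI.finset_rev P p hnonneg hsymm hCK hfd C t (FN N) (hFne N) (hFIoo N) x y
    have hFNmono : ∀ N M, N ≤ M → FN N ⊆ FN M := by
      intro N M h
      apply Finset.image_subset_image
      exact Finset.range_subset_range.mpr (by omega)
    have hANmono : Monotone AN := by
      intro N M h ω hω
      obtain ⟨h1, s, hs, hC⟩ := hω
      exact ⟨h1, s, hFNmono N M h hs, hC⟩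
    have hBNmono : Monotone BN := by
      intro N M h ω hω
      obtain ⟨h1, s, hs, hC⟩ := hω
      exact ⟨h1, s, Finset.image_subset_image (hFNmono N M h) hs, hC⟩
    -- coverage for A
    have hAeq : P x {ω : ℝ → E | ω t = y ∧ ∃ s ∈ Set.Icc (t/2) t, ω s ∈ C}
        = P x (⋃ N, AN N) := by
      apply hae
      · intro ω hω
        obtain ⟨N, h1, s, hs, hC⟩ := Set.mem_iUnion.mp hω
        refine ⟨h1, s, ?_, hC⟩
        have := hFIoo N s hs
        obtain ⟨n, _, rfl⟩ := Finset.mem_image.mp hs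
        exact ⟨(hrange n).1, (this.2).le⟩
      · rintro ω ⟨⟨h1, s, hs, hsC⟩, hωΦ⟩
        have hst : s ≠ t := by
          intro h
          rw [h, h1] at hsC
          exact hyC hsC
        have hslt : s < t := lt_of_le_of_ne hs.2 hst
        obtain ⟨ε₀, hε₀, hc⟩ := hωΦ s (by linarith [hs.1])
        obtain ⟨n, hn1, hn2⟩ := hdense s (min (s+ε₀) t) hs.1
          (lt_min (by linarith) hslt) (min_le_right _ _)
        refine Set.mem_iUnion.mpr ⟨n, h1, d n, hFmem n n le_rfl, ?_⟩
        have heq : _ = _ := hc (d n) ⟨hn1.le, lt_of_lt_of_le hn2 (min_le_left _ _)⟩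
        rw [heq]
        exact hsC
    -- coverage for B
    have hBeq : P y {ω : ℝ → E | ω t = x ∧ ∃ s ∈ Set.Icc (0:ℝ) (t/2), ω s ∈ C}
        = P y (⋃ N, BN N) := by
      apply hae
      · intro ω hω
        obtain ⟨N, h1, s, hs, hC⟩ := Set.mem_iUnion.mp hω
        refine ⟨h1, s, ?_, hC⟩
        obtain ⟨r, hr, rfl⟩ := Finset.mem_image.mp hs
        have := hFIoo N r hr
        obtain ⟨n, _, rfl⟩ := Finset.mem_image.mp hr
        constructor
        · linarith [(hrange n).2]
        · linarith [(hrange n).1]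
      · rintro ω ⟨⟨h1, s, hs, hsC⟩, hωΦ⟩
        rcases eq_or_lt_of_le hs.2 with heq | hlt
        · refine Set.mem_iUnion.mpr ⟨0, h1, t - d 0, ?_, ?_⟩
          · exact Finset.mem_image.mpr ⟨d 0, hFmem 0 0 le_rfl, rfl⟩
          · have : t - d 0 = s := by rw [hd0, heq]; ring
            rw [this]
            exact hsC
        · obtain ⟨ε₀, hε₀, hc⟩ := hωΦ s hs.1
          set ε' := min ε₀ (t/2 - s) with hε'
          have hε'0 : 0 < ε' := lt_min hε₀ (by linarith)
          have hε'le : ε' ≤ t/2 - s := min_le_right _ _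
          have hε'le2 : ε' ≤ ε₀ := min_le_left _ _
          obtain ⟨n, hn1, hn2⟩ := hdense (t - s - ε') (t - s)
            (by linarith) (by linarith) (by linarith [hs.1])
          refine Set.mem_iUnion.mpr ⟨n, h1, t - d n, ?_, ?_⟩
          · exact Finset.mem_image.mpr ⟨d n, hFmem n n le_rfl, rfl⟩
          · have heq2 : _ = _ := hc (t - d n) ⟨by linarith, by linarith⟩
            rw [heq2]
            exact hsC
    rw [hAeq, hBeq, Monotone.measure_iUnion hANmono, Monotone.measure_iUnion hBNmono]
    exact iSup_congr hANBN
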